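/- Let G be a graph, S an independent set of G, X ⊆ V(G), and set S₀ = S ∩ X. Let C₁,...,C_s be the connected components of G − (X ∪ N(S₀)). Then S \ S₀ ⊆ V(C₁) ∪ ... ∪ V(C_s), and for arbitrary maximum independent sets Iᵢ of Cᵢ, the set S₀ ∪ I₁ ∪ ... ∪ I_s is an independent set of G of size at least |S|. -/
import Mathlib

open Set

private lemma stmt18_ncard_iUnion {α ι : Type*} [Finite α] [Fintype ι] (f : ι → Set α)
    (hd : Pairwise (Function.onFun Disjoint f)) :
    (⋃ i, f i).ncard = ∑ i, (f i).ncard := by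
  classical
  have h1 : (⋃ i, f i).toFinite.toFinset
      = Finset.univ.biUnion (fun i => (f i).toFinite.toFinset) := by
    ext x; simp
  rw [Set.ncard_eq_toFinset_card _ ((⋃ i, f i).toFinite), h1,
    Finset.card_biUnion (fun i _ j _ hij => by
      simpa [Set.Finite.disjoint_toFinset] using hd hij)]
  exact Finset.sum_congr rfl fun i _ => (Set.ncard_eq_toFinset_card _ (f i).toFinite).symm

theorem stmt18 {V : Type*} [Fintype V] (G : SimpleGraph V) (S X : Set V)
    (hS : S.Pairwise fun a b => ¬ G.Adj a b) :
    let S₀ : Set V := S ∩ X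
    let W : Set V := {v | v ∉ X ∧ ∀ s ∈ S₀, ¬ G.Adj s v}
    let G' : SimpleGraph W := G.induce W
    (S \ S₀ ⊆ W) ∧
    ∀ I' : G'.ConnectedComponent → Set W,
      (∀ c, I' c ⊆ c.supp) →
      (∀ c, (I' c).Pairwise fun a b => ¬ G'.Adj a b) →
      (∀ c, ∀ T : Set W, T ⊆ c.supp → (T.Pairwise fun a b => ¬ G'.Adj a b) →
        T.ncard ≤ (I' c).ncard) →
      ((S₀ ∪ (Subtype.val '' ⋃ c, I' c)).Pairwise fun a b => ¬ G.Adj a b) ∧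
        S.ncard ≤ (S₀ ∪ (Subtype.val '' ⋃ c, I' c)).ncard := by
  classical
  intro S₀ W G'
  have hsub : S \ S₀ ⊆ W := by
    intro v hv
    refine ⟨fun hvX => hv.2 ⟨hv.1, hvX⟩, fun s hs hadj => ?_⟩
    have hne : s ≠ v := fun h => (h ▸ hv.2) hs
    exact hS hs.1 hv.1 hne hadj
  refine ⟨hsub, fun I' hIsupp hIindep hImax => ?_⟩
  haveI : Finite W := Finite.Set.finite_sep _ _
  haveI : Fintype G'.ConnectedComponent := Fintype.ofFinite _
  -- adjacency in G' vs G
  have hadj' : ∀ u v : W, G'.Adj u v ↔ G.Adj ↑u ↑v := by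
    intro u v; rfl
  -- independence
  have hindep : (S₀ ∪ (Subtype.val '' ⋃ c, I' c)).Pairwise fun a b => ¬ G.Adj a b := by
    intro a ha b hb hne hadj
    rcases ha with ha | ha <;> rcases hb with hb | hb
    · exact hS ha.1 hb.1 hne hadj
    · obtain ⟨w, hw, rfl⟩ := hb
      exact w.2.2 a ha hadj
    · obtain ⟨w, hw, rfl⟩ := ha
      exact w.2.2 b hb hadj.symm
    · obtain ⟨u, hu, rfl⟩ := ha
      obtain ⟨v, hv, rfl⟩ := hb
      obtain ⟨c, hc⟩ := Set.mem_iUnion.mp hu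
      obtain ⟨d, hd⟩ := Set.mem_iUnion.mp hv
      have hGuv : G'.Adj u v := (hadj' u v).mpr hadj
      have hcd : c = d := by
        have h1 : G'.connectedComponentMk u = c :=
          (SimpleGraph.ConnectedComponent.mem_supp_iff c u).mp (hIsupp c hc)
        have h2 : G'.connectedComponentMk v = d :=
          (SimpleGraph.ConnectedComponent.mem_supp_iff d v).mp (hIsupp d hd)
        rw [← h1, ← h2]
        exact SimpleGraph.ConnectedComponent.sound hGuv.reachable
      subst hcd
      exact hIindep c hc hd (fun h => hne (congrArg Subtype.val h)) hGuv
  refine ⟨hindep, ?_⟩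
  -- cardinality
  set T : Set W := {v : W | ↑v ∈ S} with hT
  have hTimg : Subtype.val '' T = S \ S₀ := by
    ext v
    constructor
    · rintro ⟨w, hw, rfl⟩
      exact ⟨hw, fun h => w.2.1 h.2⟩
    · intro hv
      exact ⟨⟨v, hsub hv⟩, hv.1, rfl⟩
  have hdisjsupp := SimpleGraph.pairwise_disjoint_supp_connectedComponent G'
  have hTsplit : T = ⋃ c : G'.ConnectedComponent, (T ∩ c.supp) := by
    rw [← Set.inter_iUnion, G'.iUnion_connectedComponentSupp, Set.inter_univ]
  have hTcard : T.ncard = ∑ c : G'.ConnectedComponent, (T ∩ c.supp).ncard := by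
    conv_lhs => rw [hTsplit]
    exact stmt18_ncard_iUnion (fun c => T ∩ c.supp) (fun c d hcd =>
      (Set.disjoint_left.mpr fun x hx hx' =>
        Set.disjoint_left.mp (hdisjsupp hcd) hx.2 hx'.2))
  have hIcard : (⋃ c, I' c).ncard = ∑ c, (I' c).ncard :=
    stmt18_ncard_iUnion I' (fun c d hcd =>
      Set.disjoint_left.mpr fun x hx hx' =>
        Set.disjoint_left.mp (hdisjsupp hcd) (hIsupp c hx) (hIsupp d hx'))
  have hle : T.ncard ≤ (⋃ c, I' c).ncard := by
    rw [hTcard, hIcard]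
    refine Finset.sum_le_sum fun c _ => hImax c _ Set.inter_subset_right ?_
    intro a ha b hb hne hadj
    exact hS ha.1 hb.1 (fun h => hne (Subtype.ext h)) ((hadj' a b).mp hadj)
  have hdisj1 : Disjoint S₀ (Subtype.val '' ⋃ c, I' c) := by
    refine Set.disjoint_left.mpr fun x hx hx' => ?_
    obtain ⟨w, _, rfl⟩ := hx'
    exact w.2.1 hx.2
  have hS0sub : S₀ ⊆ S := Set.inter_subset_left
  calc S.ncard = (S \ S₀).ncard + S₀.ncard := by
        rw [Set.ncard_diff_add_ncard_of_subset hS0sub]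
    _ = T.ncard + S₀.ncard := by
        rw [← hTimg, Set.ncard_image_of_injective _ Subtype.val_injective]
    _ ≤ (⋃ c, I' c).ncard + S₀.ncard := by
        exact Nat.add_le_add_right hle _
    _ = (Subtype.val '' ⋃ c, I' c).ncard + S₀.ncard := by
        rw [Set.ncard_image_of_injective _ Subtype.val_injective]
    _ = (S₀ ∪ (Subtype.val '' ⋃ c, I' c)).ncard := by
        rw [Set.ncard_union_eq hdisj1, Nat.add_comm]
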